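/- (Counting Lemma for Graphons) Let F be a simple finite graph with edge set E(F), and let W, W' : [0,1]² → [0,1] be graphons (symmetric measurable functions). Then |t(F,W) − t(F,W')| ≤ e(F) · ‖W − W'‖_□, where e(F) = |E(F)|. -/

import Mathlib

open MeasureTheory Set
open scoped ENNReal

noncomputable def cutNorm (W : ℝ → ℝ → ℝ) : ℝ :=
  sSup {r : ℝ | ∃ S T : Set ℝ, MeasurableSet S ∧ MeasurableSet T ∧ S ⊆ Set.Icc 0 1 ∧ T ⊆ Set.Icc 0 1 ∧
    r = |∫ p in S ×ˢ T, W p.1 p.2|}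

namespace CLemma

noncomputable def μ0 : Measure ℝ := volume.restrict (Set.Icc 0 1)

instance : IsProbabilityMeasure μ0 := by
  constructor
  simp [μ0, Real.volume_Icc]

lemma integrable_of_bound {α : Type*} [MeasurableSpace α] (μ : Measure α) [IsFiniteMeasure μ]
    {f : α → ℝ} (hm : AEStronglyMeasurable f μ) (C : ℝ) (hb : ∀ x, |f x| ≤ C) :
    Integrable f μ :=
  (integrable_const C).mono' hm (ae_of_all _ fun x => by simpa using hb x)

lemma restrict_finite {S : Set ℝ} (hS : S ⊆ Set.Icc 0 1) :
    IsFiniteMeasure (volume.restrict S) := by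
  constructor
  rw [Measure.restrict_apply_univ]
  exact lt_of_le_of_lt (measure_mono hS) (by simp [Real.volume_Icc])

lemma cutnorm_mem_bound (U : ℝ → ℝ → ℝ) (hU : Measurable (Function.uncurry U))
    (hUb : ∀ x y, |U x y| ≤ 1) {S T : Set ℝ} (hSm : MeasurableSet S) (hTm : MeasurableSet T)
    (hS : S ⊆ Set.Icc 0 1) (hT : T ⊆ Set.Icc 0 1) :
    |∫ p in S ×ˢ T, U p.1 p.2| ≤ 1 := by
  haveI : IsFiniteMeasure ((volume : Measure (ℝ × ℝ)).restrict (S ×ˢ T)) := by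
    constructor
    rw [Measure.restrict_apply_univ, Measure.volume_eq_prod, Measure.prod_prod]
    calc volume S * volume T ≤ volume (Set.Icc (0:ℝ) 1) * volume (Set.Icc (0:ℝ) 1) :=
          mul_le_mul' (measure_mono hS) (measure_mono hT)
      _ < ⊤ := by simp [Real.volume_Icc]
  have h := norm_integral_le_of_norm_le_const (μ := (volume : Measure (ℝ × ℝ)).restrict (S ×ˢ T))
    (f := fun p : ℝ × ℝ => U p.1 p.2) (C := 1) (ae_of_all _ fun p => by simpa using hUb p.1 p.2)
  rw [Real.norm_eq_abs] at h
  refine h.trans ?_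
  rw [one_mul, measureReal_def, Measure.restrict_apply_univ, Measure.volume_eq_prod, Measure.prod_prod]
  have : volume S * volume T ≤ 1 := by
    calc volume S * volume T ≤ volume (Set.Icc (0:ℝ) 1) * volume (Set.Icc (0:ℝ) 1) :=
          mul_le_mul' (measure_mono hS) (measure_mono hT)
      _ = 1 := by simp [Real.volume_Icc]
  calc ((volume S * volume T).toReal) ≤ (1 : ℝ≥0∞).toReal :=
        ENNReal.toReal_mono (by simp) this
    _ = 1 := by simp

lemma cutNorm_bddAbove (U : ℝ → ℝ → ℝ) (hU : Measurable (Function.uncurry U))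
    (hUb : ∀ x y, |U x y| ≤ 1) :
    BddAbove {r : ℝ | ∃ S T : Set ℝ, MeasurableSet S ∧ MeasurableSet T ∧ S ⊆ Set.Icc 0 1 ∧
      T ⊆ Set.Icc 0 1 ∧ r = |∫ p in S ×ˢ T, U p.1 p.2|} := by
  refine ⟨1, ?_⟩
  rintro r ⟨S, T, hSm, hTm, hS, hT, rfl⟩
  exact cutnorm_mem_bound U hU hUb hSm hTm hS hT

lemma cutNorm_nonneg (U : ℝ → ℝ → ℝ) (hU : Measurable (Function.uncurry U))
    (hUb : ∀ x y, |U x y| ≤ 1) : 0 ≤ cutNorm U := by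
  refine le_csSup (cutNorm_bddAbove U hU hUb) ?_
  exact ⟨∅, ∅, MeasurableSet.empty, MeasurableSet.empty, empty_subset _, empty_subset _, by simp⟩

lemma le_cutNorm (U : ℝ → ℝ → ℝ) (hU : Measurable (Function.uncurry U))
    (hUb : ∀ x y, |U x y| ≤ 1) {S T : Set ℝ} (hSm : MeasurableSet S) (hTm : MeasurableSet T)
    (hS : S ⊆ Set.Icc 0 1) (hT : T ⊆ Set.Icc 0 1) :
    |∫ x in S, ∫ y in T, U x y| ≤ cutNorm U := by
  haveI := restrict_finite hS
  haveI := restrict_finite hT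
  have hint : Integrable (fun p : ℝ × ℝ => U p.1 p.2)
      ((volume.restrict S).prod (volume.restrict T)) := by
    refine integrable_of_bound _ ((hU.comp measurable_id).aestronglyMeasurable) 1
      (fun p => hUb p.1 p.2)
  have heq : ∫ p in S ×ˢ T, U p.1 p.2 = ∫ x in S, ∫ y in T, U x y := by
    rw [Measure.volume_eq_prod, ← Measure.prod_restrict]
    exact integral_prod _ hint
  rw [← heq]
  refine le_csSup (cutNorm_bddAbove U hU hUb) ?_
  exact ⟨S, T, hSm, hTm, hS, hT, rfl⟩

end CLemma
namespace CLemma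

lemma step_replace {h f : ℝ → ℝ} (hhm : Measurable h)
    (hhi : Integrable h (volume.restrict (Set.Icc 0 1)))
    (hfm : Measurable f) (hf01 : ∀ x, f x ∈ Set.Icc (0:ℝ) 1) :
    ∃ S : Set ℝ, MeasurableSet S ∧ S ⊆ Set.Icc 0 1 ∧
      |∫ x in Set.Icc (0:ℝ) 1, f x * h x| ≤ |∫ x in S, h x| := by
  set A : Set ℝ := Set.Icc 0 1 with hA
  have hAm : MeasurableSet A := measurableSet_Icc
  set P : Set ℝ := {x | 0 ≤ h x} with hP
  have hPm : MeasurableSet P := measurableSet_le measurable_const hhm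
  set Sp : Set ℝ := P ∩ A with hSp
  set Sn : Set ℝ := Pᶜ ∩ A with hSn
  have hSpm : MeasurableSet Sp := hPm.inter hAm
  have hSnm : MeasurableSet Sn := hPm.compl.inter hAm
  have hfh_int : Integrable (fun x => f x * h x) (volume.restrict A) := by
    refine hhi.bdd_mul (c := 1) hfm.aestronglyMeasurable (ae_of_all _ fun x => ?_)
    rw [Real.norm_eq_abs, abs_of_nonneg (hf01 x).1]
    exact (hf01 x).2
  have hSp_eq : ∫ x in Sp, h x = ∫ x in A, P.indicator h x := by
    rw [integral_indicator hPm, Measure.restrict_restrict hPm]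
  have hSn_eq : ∫ x in Sn, h x = ∫ x in A, Pᶜ.indicator h x := by
    rw [integral_indicator hPm.compl, Measure.restrict_restrict hPm.compl]
  have hup : ∫ x in A, f x * h x ≤ ∫ x in Sp, h x := by
    rw [hSp_eq]
    refine integral_mono hfh_int (hhi.indicator hPm) fun x => ?_
    by_cases hx : x ∈ P
    · rw [Set.indicator_of_mem hx]
      exact mul_le_of_le_one_left hx (hf01 x).2
    · rw [Set.indicator_of_notMem hx]
      have : h x < 0 := not_le.mp hx
      exact mul_nonpos_of_nonneg_of_nonpos (hf01 x).1 this.le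
  have hlo : ∫ x in Sn, h x ≤ ∫ x in A, f x * h x := by
    rw [hSn_eq]
    refine integral_mono (hhi.indicator hPm.compl) hfh_int fun x => ?_
    by_cases hx : x ∈ P
    · rw [Set.indicator_of_notMem (by simpa using hx)]
      exact mul_nonneg (hf01 x).1 hx
    · rw [Set.indicator_of_mem (by simpa using hx)]
      have hx' : h x ≤ 0 := (not_le.mp hx).le
      calc h x = 1 * h x := (one_mul _).symm
        _ ≤ f x * h x := mul_le_mul_of_nonpos_right (hf01 x).2 hx'
  have hpn : 0 ≤ ∫ x in Sp, h x := setIntegral_nonneg hSpm fun x hx => hx.1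
  have hnn : ∫ x in Sn, h x ≤ 0 := setIntegral_nonpos hSnm fun x hx => le_of_not_ge (by simpa [hP] using hx.1)
  rcases le_total 0 (∫ x in A, f x * h x) with hc | hc
  · exact ⟨Sp, hSpm, inter_subset_right, by
      rw [abs_of_nonneg hc, abs_of_nonneg hpn]; exact hup⟩
  · exact ⟨Sn, hSnm, inter_subset_right, by
      rw [abs_of_nonpos hc, abs_of_nonpos hnn]; exact neg_le_neg hlo⟩

lemma bilinear_bound (U : ℝ → ℝ → ℝ) (hU : Measurable (Function.uncurry U))
    (hUb : ∀ x y, |U x y| ≤ 1) (f g : ℝ → ℝ) (hfm : Measurable f)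
    (hf01 : ∀ x, f x ∈ Set.Icc (0:ℝ) 1) (hgm : Measurable g)
    (hg01 : ∀ x, g x ∈ Set.Icc (0:ℝ) 1) :
    |∫ x in Set.Icc (0:ℝ) 1, f x * ∫ y in Set.Icc (0:ℝ) 1, U x y * g y| ≤ cutNorm U := by
  set A : Set ℝ := Set.Icc 0 1 with hA
  have hAm : MeasurableSet A := measurableSet_Icc
  haveI : IsFiniteMeasure (volume.restrict A) := restrict_finite subset_rfl
  set h1 : ℝ → ℝ := fun x => ∫ y in A, U x y * g y with hh1
  have hUg : ∀ x y, |U x y * g y| ≤ 1 := by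
    intro x y
    rw [abs_mul]
    refine mul_le_one₀ (hUb x y) (abs_nonneg _) ?_
    rw [abs_of_nonneg (hg01 y).1]; exact (hg01 y).2
  have hUgm : Measurable (Function.uncurry fun x y => U x y * g y) :=
    hU.mul (hgm.comp measurable_snd)
  have hh1m : Measurable h1 := by
    have := (hUgm.stronglyMeasurable).integral_prod_right'
      (ν := volume.restrict A)
    exact this.measurable
  have hh1b : ∀ x, |h1 x| ≤ 1 := by
    intro x
    have := norm_integral_le_of_norm_le_const (μ := volume.restrict A)
      (f := fun y => U x y * g y) (C := 1) (ae_of_all _ fun y => by simpa only [Real.norm_eq_abs] using hUg x y)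
    rw [Real.norm_eq_abs] at this
    refine this.trans ?_
    simp [hA, Real.volume_Icc]
  have hh1i : Integrable h1 (volume.restrict A) :=
    integrable_of_bound _ hh1m.aestronglyMeasurable 1 hh1b
  obtain ⟨S, hSm, hSA, hS⟩ := step_replace hh1m hh1i hfm hf01
  haveI := restrict_finite hSA
  have hswap : ∫ x in S, h1 x = ∫ y in A, g y * ∫ x in S, U x y := by
    have hint : Integrable (Function.uncurry fun x y => U x y * g y)
        ((volume.restrict S).prod (volume.restrict A)) :=
      integrable_of_bound _ hUgm.aestronglyMeasurable 1 (fun p => hUg p.1 p.2)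
    rw [hh1]
    rw [integral_integral_swap hint]
    congr 1
    funext y
    rw [show (fun x => U x y * g y) = fun x => g y * U x y from funext fun x => mul_comm _ _]
    exact integral_const_mul _ _
  set h2 : ℝ → ℝ := fun y => ∫ x in S, U x y with hh2
  have hvolS : (volume.restrict S) Set.univ ≤ 1 := by
    rw [Measure.restrict_apply_univ]
    calc volume S ≤ volume A := measure_mono hSA
      _ = 1 := by simp [hA, Real.volume_Icc]
  have hh2m : Measurable h2 := by
    have := (hU.stronglyMeasurable).integral_prod_left' (μ := volume.restrict S)
    exact this.measurable
  have hh2b : ∀ y, |h2 y| ≤ 1 := by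
    intro y
    have := norm_integral_le_of_norm_le_const (μ := volume.restrict S)
      (f := fun x => U x y) (C := 1)
      (ae_of_all _ fun x => by simpa only [Real.norm_eq_abs] using hUb x y)
    rw [Real.norm_eq_abs] at this
    refine this.trans ?_
    rw [one_mul]
    exact (ENNReal.toReal_mono (by simp) hvolS).trans (by simp)
  have hh2i : Integrable h2 (volume.restrict A) :=
    integrable_of_bound _ hh2m.aestronglyMeasurable 1 hh2b
  obtain ⟨T, hTm, hTA, hT⟩ := step_replace hh2m hh2i hgm hg01
  haveI := restrict_finite hTA
  have hswap2 : ∫ y in T, h2 y = ∫ x in S, ∫ y in T, U x y := by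
    have hint : Integrable (Function.uncurry U)
        ((volume.restrict S).prod (volume.restrict T)) :=
      integrable_of_bound _ hU.aestronglyMeasurable 1 (fun p => hUb p.1 p.2)
    rw [hh2]
    exact (integral_integral_swap hint).symm
  calc |∫ x in A, f x * h1 x| ≤ |∫ x in S, h1 x| := hS
    _ = |∫ y in A, g y * h2 y| := by rw [hswap]
    _ ≤ |∫ y in T, h2 y| := hT
    _ = |∫ x in S, ∫ y in T, U x y| := by rw [hswap2]
    _ ≤ cutNorm U := le_cutNorm U hU hUb hSm hTm hSA hTA

end CLemma
namespace CLemma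

variable {V : Type*} [Fintype V] [DecidableEq V]

/-- Assemble a point of `[0,1]^V` from values at `a`, `b`, and the rest. -/
def asm (a b : V) (w : (ℝ × ℝ) × ({c : V // ¬ (c = a ∨ c = b)} → ℝ)) : V → ℝ :=
  fun c => if h : c = a then w.1.1 else if h' : c = b then w.1.2
    else w.2 ⟨c, fun hp => hp.elim h h'⟩

lemma measurable_asm (a b : V) : Measurable (asm a b) := by
  refine measurable_pi_lambda _ fun c => ?_
  by_cases h : c = a
  · simp only [asm, dif_pos h]; exact measurable_fst.fst
  · by_cases h' : c = b
    · simp only [asm, dif_neg h, dif_pos h']; exact measurable_fst.snd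
    · simp only [asm, dif_neg h, dif_neg h']
      exact (measurable_pi_apply _).comp measurable_snd

lemma core (a b : V) (hab : a ≠ b)
    (U : ℝ → ℝ → ℝ) (hU : Measurable (Function.uncurry U)) (hUb : ∀ x y, |U x y| ≤ 1)
    (f g : (V → ℝ) → ℝ)
    (hfm : Measurable f) (hf01 : ∀ x, f x ∈ Set.Icc (0:ℝ) 1)
    (hfb : ∀ x y : V → ℝ, (∀ c, c ≠ b → x c = y c) → f x = f y)
    (hgm : Measurable g) (hg01 : ∀ x, g x ∈ Set.Icc (0:ℝ) 1)
    (hga : ∀ x y : V → ℝ, (∀ c, c ≠ a → x c = y c) → g x = g y) :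
    |∫ x : V → ℝ, U (x a) (x b) * (f x * g x) ∂(Measure.pi fun _ => μ0)| ≤ cutNorm U := by
  classical
  set p : V → Prop := fun c => c = a ∨ c = b with hp
  set q : Subtype p → Prop := fun d => d.1 = a with hq
  letI uq1 : Unique (Subtype q) :=
    { default := ⟨⟨a, Or.inl rfl⟩, rfl⟩
      uniq := fun d => Subtype.ext (Subtype.ext d.2) }
  letI uq2 : Unique {d : Subtype p // ¬ q d} :=
    { default := ⟨⟨b, Or.inr rfl⟩, fun h => hab h.symm⟩
      uniq := fun d => Subtype.ext (Subtype.ext (d.1.2.resolve_left d.2)) }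
  set ρ : Measure ({c : V // ¬ p c} → ℝ) := Measure.pi fun _ => μ0 with hρ
  set E2 : (Subtype p → ℝ) ≃ᵐ ℝ × ℝ :=
    (MeasurableEquiv.piEquivPiSubtypeProd (fun _ : Subtype p => ℝ) q).trans
      ((MeasurableEquiv.funUnique (Subtype q) ℝ).prodCongr
        (MeasurableEquiv.funUnique {d : Subtype p // ¬ q d} ℝ)) with hE2
  have mp2 : MeasurePreserving E2 (Measure.pi fun _ : Subtype p => μ0) (μ0.prod μ0) := by
    refine ((measurePreserving_funUnique μ0 _).prod (measurePreserving_funUnique μ0 _)).comp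
      (f := ⇑(MeasurableEquiv.piEquivPiSubtypeProd (fun _ : Subtype p => ℝ) q)) ?_
    convert measurePreserving_piEquivPiSubtypeProd (fun _ : Subtype p => μ0) q using 2 <;> congr!
  set Etot : (V → ℝ) ≃ᵐ (ℝ × ℝ) × ({c : V // ¬ p c} → ℝ) :=
    (MeasurableEquiv.piEquivPiSubtypeProd (fun _ : V => ℝ) p).trans
      (E2.prodCongr (MeasurableEquiv.refl _)) with hEtot
  have mpE : MeasurePreserving Etot (Measure.pi fun _ : V => μ0) ((μ0.prod μ0).prod ρ) :=
    (mp2.prod (MeasurePreserving.id ρ)).comp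
      (measurePreserving_piEquivPiSubtypeProd (fun _ : V => μ0) p)
  have hinv : ∀ v : V → ℝ, asm a b (Etot v) = v := by
    intro v
    funext c
    by_cases h : c = a
    · rw [show asm a b (Etot v) c = (Etot v).1.1 from dif_pos h]
      subst h; rfl
    · by_cases h' : c = b
      · rw [show asm a b (Etot v) c = (Etot v).1.2 from (dif_neg h).trans (dif_pos h')]
        subst h'; rfl
      · rw [show asm a b (Etot v) c = (Etot v).2 ⟨c, fun hp => hp.elim h h'⟩ from
          (dif_neg h).trans (dif_neg h')]
        rfl
  have hstep1 : ∫ v : V → ℝ, U (v a) (v b) * (f v * g v) ∂(Measure.pi fun _ => μ0)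
      = ∫ w, U w.1.1 w.1.2 * (f (asm a b w) * g (asm a b w)) ∂((μ0.prod μ0).prod ρ) := by
    rw [← mpE.integral_comp Etot.measurableEmbedding]
    congr 1
    funext v
    have h1 : (asm a b (Etot v)) a = (Etot v).1.1 := dif_pos rfl
    have h2 : (asm a b (Etot v)) b = (Etot v).1.2 :=
      (dif_neg (fun h : b = a => hab h.symm)).trans (dif_pos rfl)
    rw [← h1, ← h2, hinv v]
  rw [hstep1]
  haveI : IsProbabilityMeasure ρ := by rw [hρ]; infer_instance
  set G : (ℝ × ℝ) × ({c : V // ¬ p c} → ℝ) → ℝ :=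
    fun w => U w.1.1 w.1.2 * (f (asm a b w) * g (asm a b w)) with hG
  have hGm : Measurable G := by
    exact (hU.comp (measurable_fst.fst.prodMk measurable_fst.snd)).mul
      ((hfm.comp (measurable_asm a b)).mul (hgm.comp (measurable_asm a b)))
  have hGb : ∀ w, |G w| ≤ 1 := by
    intro w
    rw [hG]
    simp only [abs_mul]
    refine mul_le_one₀ (hUb _ _) (by positivity) ?_
    rw [abs_of_nonneg (hf01 _).1, abs_of_nonneg (hg01 _).1]
    exact mul_le_one₀ (hf01 _).2 (hg01 _).1 (hg01 _).2
  have hGi : Integrable G ((μ0.prod μ0).prod ρ) :=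
    integrable_of_bound _ hGm.aestronglyMeasurable 1 hGb
  rw [integral_prod_symm _ hGi]
  have hz : ∀ z, ‖∫ u, G (u, z) ∂(μ0.prod μ0)‖ ≤ cutNorm U := by
    intro z
    rw [Real.norm_eq_abs]
    have hGzi : Integrable (fun u : ℝ × ℝ => G (u, z)) (μ0.prod μ0) :=
      integrable_of_bound _ (hGm.comp (measurable_id.prodMk measurable_const)
        ).aestronglyMeasurable 1 (fun u => hGb (u, z))
    rw [integral_prod _ hGzi]
    set F1 : ℝ → ℝ := fun x => f (asm a b ((x, 0), z)) with hF1
    set G1 : ℝ → ℝ := fun y => g (asm a b ((0, y), z)) with hG1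
    have hfF : ∀ x y : ℝ, f (asm a b ((x, y), z)) = F1 x := by
      intro x y
      refine hfb _ _ fun c hc => ?_
      by_cases h : c = a
      · rw [show asm a b ((x, y), z) c = x from dif_pos h,
          show asm a b ((x, 0), z) c = x from dif_pos h]
      · rw [show asm a b ((x, y), z) c = z ⟨c, fun hp => hp.elim h hc⟩ from
            (dif_neg h).trans (dif_neg hc),
          show asm a b ((x, 0), z) c = z ⟨c, fun hp => hp.elim h hc⟩ from
            (dif_neg h).trans (dif_neg hc)]
    have hgG : ∀ x y : ℝ, g (asm a b ((x, y), z)) = G1 y := by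
      intro x y
      refine hga _ _ fun c hc => ?_
      by_cases h : c = b
      · rw [show asm a b ((x, y), z) c = y from (dif_neg hc).trans (dif_pos h),
          show asm a b ((0, y), z) c = y from (dif_neg hc).trans (dif_pos h)]
      · rw [show asm a b ((x, y), z) c = z ⟨c, fun hp => hp.elim hc h⟩ from
            (dif_neg hc).trans (dif_neg h),
          show asm a b ((0, y), z) c = z ⟨c, fun hp => hp.elim hc h⟩ from
            (dif_neg hc).trans (dif_neg h)]
    have hrw : ∀ x : ℝ, (∫ y, G ((x, y), z) ∂μ0) = F1 x * ∫ y, U x y * G1 y ∂μ0 := by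
      intro x
      rw [← integral_const_mul]
      congr 1
      funext y
      rw [hG]
      simp only
      rw [hfF x y, hgG x y]
      ring
    have hmain := bilinear_bound U hU hUb F1 G1
      (hfm.comp ((measurable_asm a b).comp
        ((measurable_id.prodMk measurable_const).prodMk measurable_const)))
      (fun x => hf01 _)
      (hgm.comp ((measurable_asm a b).comp
        ((measurable_const.prodMk measurable_id).prodMk measurable_const)))
      (fun y => hg01 _)
    have hμ0 : μ0 = volume.restrict (Set.Icc 0 1) := rfl
    calc |∫ x, ∫ y, G ((x, y), z) ∂μ0 ∂μ0|
        = |∫ x, F1 x * ∫ y, U x y * G1 y ∂μ0 ∂μ0| := by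
          congr 1
          exact integral_congr_ae (ae_of_all _ hrw)
      _ ≤ cutNorm U := hmain
  calc |∫ z, ∫ u, G (u, z) ∂(μ0.prod μ0) ∂ρ|
      ≤ cutNorm U * (ρ Set.univ).toReal := by
        rw [← Real.norm_eq_abs]
        exact norm_integral_le_of_norm_le_const (ae_of_all _ hz)
    _ = cutNorm U := by simp

end CLemma
/-- Homomorphism density of a finite simple graph F in a kernel W, integrating over [0,1]^V(F). -/
noncomputable def homDensity {V : Type*} [Fintype V] [DecidableEq V]
    (F : SimpleGraph V) [DecidableRel F.Adj] (W : ℝ → ℝ → ℝ) : ℝ :=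
  ∫ x : V → ℝ, (∏ e ∈ F.edgeFinset, W (x (Quot.out e).1) (x (Quot.out e).2))
    ∂(MeasureTheory.Measure.pi fun _ => MeasureTheory.volume.restrict (Set.Icc 0 1))

/-- W is a graphon: symmetric, measurable, [0,1]-valued. -/
def IsGraphon (W : ℝ → ℝ → ℝ) : Prop :=
  (∀ x y, W x y = W y x) ∧ Measurable (Function.uncurry W) ∧ ∀ x y, W x y ∈ Set.Icc (0:ℝ) 1

/-- Counting Lemma for graphons: |t(F,W) − t(F,W')| ≤ e(F)·‖W − W'‖_□. -/
theorem counting_lemma {V : Type*} [Fintype V] [DecidableEq V]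
    (F : SimpleGraph V) [DecidableRel F.Adj] (W W' : ℝ → ℝ → ℝ)
    (hW : IsGraphon W) (hW' : IsGraphon W') :
    |homDensity F W - homDensity F W'| ≤
      (F.edgeFinset.card : ℝ) * cutNorm (fun x y => W x y - W' x y) := by
  classical
  obtain ⟨hWs, hWm, hW01⟩ := hW
  obtain ⟨hW's, hW'm, hW'01⟩ := hW'
  set U : ℝ → ℝ → ℝ := fun x y => W x y - W' x y with hUdef
  have hUm : Measurable (Function.uncurry U) := hWm.sub hW'm
  have hUb : ∀ x y, |U x y| ≤ 1 := by
    intro x y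
    rw [abs_le]
    constructor
    · have := (hW01 x y).1; have := (hW'01 x y).2; simp only [hUdef]; linarith
    · have := (hW01 x y).2; have := (hW'01 x y).1; simp only [hUdef]; linarith
  set π : MeasureTheory.Measure (V → ℝ) :=
    MeasureTheory.Measure.pi fun _ => MeasureTheory.volume.restrict (Set.Icc 0 1) with hπ
  haveI : MeasureTheory.IsProbabilityMeasure
      (MeasureTheory.volume.restrict (Set.Icc (0:ℝ) 1)) :=
    inferInstanceAs (MeasureTheory.IsProbabilityMeasure CLemma.μ0)
  haveI : MeasureTheory.IsProbabilityMeasure π := by rw [hπ]; infer_instance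
  -- measurability of edge factors
  have hfacm : ∀ (K : ℝ → ℝ → ℝ), Measurable (Function.uncurry K) →
      ∀ s : Finset (Sym2 V), Measurable
        (fun x : V → ℝ => ∏ e' ∈ s, K (x (Quot.out e').1) (x (Quot.out e').2)) := by
    intro K hK s
    refine Finset.measurable_prod s fun e' _ => ?_
    have hm : Measurable fun x : V → ℝ => (x (Quot.out e').1, x (Quot.out e').2) :=
      (measurable_pi_apply _).prodMk (measurable_pi_apply _)
    exact hK.comp hm
  have hfac01 : ∀ (K : ℝ → ℝ → ℝ), (∀ x y, K x y ∈ Set.Icc (0:ℝ) 1) →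
      ∀ (s : Finset (Sym2 V)) (x : V → ℝ),
        (∏ e' ∈ s, K (x (Quot.out e').1) (x (Quot.out e').2)) ∈ Set.Icc (0:ℝ) 1 := by
    intro K hK s x
    constructor
    · exact Finset.prod_nonneg fun e' _ => (hK _ _).1
    · exact Finset.prod_le_one (fun e' _ => (hK _ _).1) (fun e' _ => (hK _ _).2)
  have hintb : ∀ h : (V → ℝ) → ℝ, Measurable h → (∀ x, |h x| ≤ 1) →
      MeasureTheory.Integrable h π := fun h hm hb =>
    CLemma.integrable_of_bound π hm.aestronglyMeasurable 1 hb
  set Q : Finset (Sym2 V) → ℝ := fun s =>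
    ∫ x : V → ℝ, (∏ e' ∈ s, W (x (Quot.out e').1) (x (Quot.out e').2)) *
      (∏ e' ∈ F.edgeFinset \ s, W' (x (Quot.out e').1) (x (Quot.out e').2)) ∂π with hQ
  have key : ∀ s : Finset (Sym2 V), s ⊆ F.edgeFinset →
      |Q s - Q ∅| ≤ s.card * cutNorm U := by
    intro s
    induction s using Finset.induction_on with
    | empty => intro _; simp
    | @insert e s he ih =>
      intro hsub
      have hes : e ∈ F.edgeFinset := hsub (Finset.mem_insert_self e s)
      have hssub : s ⊆ F.edgeFinset := (Finset.subset_insert e s).trans hsub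
      set a : V := (Quot.out e).1 with ha
      set b : V := (Quot.out e).2 with hb
      have hsab : s(a, b) = e := by
        rw [ha, hb]
        exact congrArg _ Prod.mk.eta |>.trans (Quot.out_eq e)
      have hadj : F.Adj a b := by
        rw [← SimpleGraph.mem_edgeSet, hsab, ← SimpleGraph.mem_edgeFinset]
        exact hes
      have hab : a ≠ b := hadj.ne
      set t : Finset (Sym2 V) := F.edgeFinset \ insert e s with ht
      have het : e ∉ t := by simp [ht]
      have hts : F.edgeFinset \ s = insert e t := by
        rw [ht, Finset.sdiff_insert, Finset.insert_erase]
        exact Finset.mem_sdiff.mpr ⟨hes, he⟩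
      -- the two "independent" factors
      set f : (V → ℝ) → ℝ := fun x =>
        (∏ e' ∈ s.filter (fun e' => ¬ b ∈ e'), W (x (Quot.out e').1) (x (Quot.out e').2)) *
        (∏ e' ∈ t.filter (fun e' => ¬ b ∈ e'), W' (x (Quot.out e').1) (x (Quot.out e').2))
        with hf
      set g : (V → ℝ) → ℝ := fun x =>
        (∏ e' ∈ s.filter (fun e' => b ∈ e'), W (x (Quot.out e').1) (x (Quot.out e').2)) *
        (∏ e' ∈ t.filter (fun e' => b ∈ e'), W' (x (Quot.out e').1) (x (Quot.out e').2))
        with hg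
      have hfg : ∀ x : V → ℝ, f x * g x =
          (∏ e' ∈ s, W (x (Quot.out e').1) (x (Quot.out e').2)) *
          (∏ e' ∈ t, W' (x (Quot.out e').1) (x (Quot.out e').2)) := by
        intro x
        rw [hf, hg, ← Finset.prod_filter_mul_prod_filter_not s (fun e' => b ∈ e'),
          ← Finset.prod_filter_mul_prod_filter_not t (fun e' => b ∈ e')]
        ring
      have hstep : |Q (insert e s) - Q s| ≤ cutNorm U := by
        have hQi : Q (insert e s) = ∫ x : V → ℝ,
            W (x a) (x b) * (f x * g x) ∂π := by
          simp only [hQ]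
          refine MeasureTheory.integral_congr_ae (MeasureTheory.ae_of_all _ fun x => ?_)
          beta_reduce
          rw [Finset.prod_insert he, ← ht, ← ha, ← hb, hfg]
          ring
        have hQs : Q s = ∫ x : V → ℝ,
            W' (x a) (x b) * (f x * g x) ∂π := by
          simp only [hQ]
          refine MeasureTheory.integral_congr_ae (MeasureTheory.ae_of_all _ fun x => ?_)
          beta_reduce
          rw [hts, Finset.prod_insert het, ← ha, ← hb, hfg]
          ring
        have hf01 : ∀ x, f x ∈ Set.Icc (0:ℝ) 1 := by
          intro x
          rw [hf]
          constructor
          · exact mul_nonneg (hfac01 W hW01 _ x).1 (hfac01 W' hW'01 _ x).1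
          · exact mul_le_one₀ (hfac01 W hW01 _ x).2 (hfac01 W' hW'01 _ x).1
              (hfac01 W' hW'01 _ x).2
        have hg01 : ∀ x, g x ∈ Set.Icc (0:ℝ) 1 := by
          intro x
          rw [hg]
          constructor
          · exact mul_nonneg (hfac01 W hW01 _ x).1 (hfac01 W' hW'01 _ x).1
          · exact mul_le_one₀ (hfac01 W hW01 _ x).2 (hfac01 W' hW'01 _ x).1
              (hfac01 W' hW'01 _ x).2
        have hfm : Measurable f := (hfacm W hWm _).mul (hfacm W' hW'm _)
        have hgm : Measurable g := (hfacm W hWm _).mul (hfacm W' hW'm _)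
        have hfb : ∀ x y : V → ℝ, (∀ c, c ≠ b → x c = y c) → f x = f y := by
          intro x y hxy
          rw [hf]
          beta_reduce
          have hcoord : ∀ (u : Finset (Sym2 V)) (e' : Sym2 V),
              e' ∈ u.filter (fun e' => ¬ b ∈ e') →
              x (Quot.out e').1 = y (Quot.out e').1 ∧
              x (Quot.out e').2 = y (Quot.out e').2 := by
            intro u e' he'
            have hbe : ¬ b ∈ e' := (Finset.mem_filter.mp he').2
            constructor
            · exact hxy _ fun hc => hbe (hc ▸ Sym2.out_fst_mem e')
            · exact hxy _ fun hc => hbe (hc ▸ Sym2.out_snd_mem e')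
          exact congrArg₂ (· * ·)
            (Finset.prod_congr rfl fun e' he' => by
              rw [(hcoord s e' he').1, (hcoord s e' he').2])
            (Finset.prod_congr rfl fun e' he' => by
              rw [(hcoord t e' he').1, (hcoord t e' he').2])
        have hga : ∀ x y : V → ℝ, (∀ c, c ≠ a → x c = y c) → g x = g y := by
          intro x y hxy
          rw [hg]
          beta_reduce
          have hane : ∀ (u : Finset (Sym2 V)), u = s ∨ u = t → ∀ e' : Sym2 V,
              e' ∈ u.filter (fun e' => b ∈ e') → ¬ a ∈ e' := by
            intro u hu e' he' hae
            have hbe : b ∈ e' := (Finset.mem_filter.mp he').2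
            have hee : e' = e := by
              rw [← hsab]
              exact (Sym2.mem_and_mem_iff hab).mp ⟨hae, hbe⟩
            rcases hu with rfl | rfl
            · exact he (hee ▸ (Finset.mem_filter.mp he').1)
            · exact het (hee ▸ (Finset.mem_filter.mp he').1)
          have hcoord : ∀ (u : Finset (Sym2 V)), u = s ∨ u = t → ∀ e' : Sym2 V,
              e' ∈ u.filter (fun e' => b ∈ e') →
              x (Quot.out e').1 = y (Quot.out e').1 ∧
              x (Quot.out e').2 = y (Quot.out e').2 := by
            intro u hu e' he'
            have hae : ¬ a ∈ e' := hane u hu e' he'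
            constructor
            · exact hxy _ fun hc => hae (hc ▸ Sym2.out_fst_mem e')
            · exact hxy _ fun hc => hae (hc ▸ Sym2.out_snd_mem e')
          exact congrArg₂ (· * ·)
            (Finset.prod_congr rfl fun e' he' => by
              rw [(hcoord s (Or.inl rfl) e' he').1, (hcoord s (Or.inl rfl) e' he').2])
            (Finset.prod_congr rfl fun e' he' => by
              rw [(hcoord t (Or.inr rfl) e' he').1, (hcoord t (Or.inr rfl) e' he').2])
        have hdiff : Q (insert e s) - Q s =
            ∫ x : V → ℝ, U (x a) (x b) * (f x * g x) ∂π := by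
          rw [hQi, hQs, ← MeasureTheory.integral_sub]
          · refine MeasureTheory.integral_congr_ae (MeasureTheory.ae_of_all _ fun x => ?_)
            simp only [hUdef]
            ring
          · have hmab : Measurable fun x : V → ℝ => (x a, x b) :=
              (measurable_pi_apply _).prodMk (measurable_pi_apply _)
            refine hintb _ ((hWm.comp hmab).mul (hfm.mul hgm)) fun x => ?_
            rw [abs_mul]
            refine mul_le_one₀ (by
              rw [abs_of_nonneg (hW01 _ _).1]; exact (hW01 _ _).2) (abs_nonneg _) ?_
            rw [abs_mul, abs_of_nonneg (hf01 x).1, abs_of_nonneg (hg01 x).1]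
            exact mul_le_one₀ (hf01 x).2 (hg01 x).1 (hg01 x).2
          · have hmab : Measurable fun x : V → ℝ => (x a, x b) :=
              (measurable_pi_apply _).prodMk (measurable_pi_apply _)
            refine hintb _ ((hW'm.comp hmab).mul (hfm.mul hgm)) fun x => ?_
            rw [abs_mul]
            refine mul_le_one₀ (by
              rw [abs_of_nonneg (hW'01 _ _).1]; exact (hW'01 _ _).2) (abs_nonneg _) ?_
            rw [abs_mul, abs_of_nonneg (hf01 x).1, abs_of_nonneg (hg01 x).1]
            exact mul_le_one₀ (hf01 x).2 (hg01 x).1 (hg01 x).2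
        rw [hdiff]
        exact CLemma.core a b hab U hUm hUb f g hfm hf01 hfb hgm hg01 hga
      calc |Q (insert e s) - Q ∅|
          ≤ |Q (insert e s) - Q s| + |Q s - Q ∅| := abs_sub_le _ _ _
        _ ≤ cutNorm U + s.card * cutNorm U := add_le_add hstep (ih hssub)
        _ = (insert e s).card * cutNorm U := by
            rw [Finset.card_insert_of_notMem he]
            push_cast
            ring
  have hQE : Q F.edgeFinset = homDensity F W := by
    rw [hQ, homDensity]
    simp only [Finset.sdiff_self, Finset.prod_empty, mul_one]
    rfl
  have hQ0 : Q ∅ = homDensity F W' := by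
    rw [hQ, homDensity]
    simp only [Finset.sdiff_empty, Finset.prod_empty, one_mul]
    rfl
  rw [← hQE, ← hQ0]
  exact key F.edgeFinset (Finset.Subset.refl _)
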